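/- Every continuous field automorphism of ℂ_p fixing ℚ_p restricts to a ℚ_p-automorphism of ℚ̄_p, and this gives an isomorphism between the group of continuous automorphisms of ℂ_p over ℚ_p and the Galois group G_{ℚ_p} = Gal(ℚ̄_p/ℚ_p). -/

import Mathlib

theorem aux_le_of_pow_le {a b M : ℝ} (hb : 0 < b) (h : ∀ n : ℕ, a ^ n ≤ M * b ^ n) : a ≤ b := by
  by_contra hab
  push_neg at hab
  have hr : 1 < a / b := (one_lt_div hb).mpr hab
  have hbd : ∀ n : ℕ, (a / b) ^ n ≤ M := by
    intro n
    rw [div_pow, div_le_iff₀ (pow_pos hb n)]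
    exact h n
  have := (tendsto_pow_atTop_atTop_of_one_lt hr).eventually_gt_atTop M
  obtain ⟨n, hn⟩ := this.exists
  exact absurd (hbd n) (not_le.mpr hn)

theorem aux_norm_le (p : ℕ) [Fact p.Prime] (C : Type*) [NormedField C] [Algebra ℚ_[p] C]
    (hext : ∀ x : ℚ_[p], ‖algebraMap ℚ_[p] C x‖ = ‖x‖)
    (K : Type*) [Field K] [Algebra ℚ_[p] K] [FiniteDimensional ℚ_[p] K]
    (f g : K →ₐ[ℚ_[p]] C) (x : K) : ‖g x‖ ≤ ‖f x‖ := by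
  letI : NormedSpace ℚ_[p] C := by
    refine ⟨fun c y => ?_⟩
    rw [Algebra.smul_def, norm_mul, hext]
  letI : NormedField K :=
    NormedField.induced K C f.toRingHom (RingHom.injective _)
  have hnormK : ∀ z : K, ‖z‖ = ‖f z‖ := fun z => rfl
  letI : NormedSpace ℚ_[p] K := by
    refine ⟨fun c y => ?_⟩
    rw [hnormK, hnormK, map_smul, Algebra.smul_def, norm_mul, hext]
  have hgc : Continuous (g.toLinearMap : K →ₗ[ℚ_[p]] C) :=
    LinearMap.continuous_of_finiteDimensional _
  let G : K →L[ℚ_[p]] C := ⟨g.toLinearMap, hgc⟩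
  rcases eq_or_ne x 0 with rfl | hx
  · simp
  · have hfx : 0 < ‖f x‖ := by
      rw [norm_pos_iff]
      exact (map_ne_zero f).mpr hx
    refine aux_le_of_pow_le (M := ‖G‖) hfx fun n => ?_
    calc ‖g x‖ ^ n = ‖g (x ^ n)‖ := by rw [map_pow, norm_pow]
    _ = ‖G (x ^ n)‖ := rfl
    _ ≤ ‖G‖ * ‖x ^ n‖ := G.le_opNorm _
    _ = ‖G‖ * ‖f x‖ ^ n := by rw [hnormK, map_pow, norm_pow]

theorem aux_norm_eq (p : ℕ) [Fact p.Prime] (C : Type*) [NormedField C] [Algebra ℚ_[p] C]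
    (hext : ∀ x : ℚ_[p], ‖algebraMap ℚ_[p] C x‖ = ‖x‖)
    (K : Type*) [Field K] [Algebra ℚ_[p] K] [FiniteDimensional ℚ_[p] K]
    (f g : K →ₐ[ℚ_[p]] C) (x : K) : ‖f x‖ = ‖g x‖ :=
  le_antisymm (aux_norm_le p C hext K g f x) (aux_norm_le p C hext K f g x)



/-- An abstract characterization of `ℂ_p`, the completion of an algebraic closure of `ℚ_p`:
a complete, algebraically closed, nonarchimedean normed field, whose (multiplicative) norm
extends the `p`-adic norm, and in which the algebraic elements over `ℚ_p` are dense. -/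
class PadicComplexField (p : ℕ) [Fact p.Prime] (C : Type*) [NormedField C]
    [Algebra ℚ_[p] C] : Prop where
  complete : CompleteSpace C
  ultrametric : IsUltrametricDist C
  algClosed : IsAlgClosed C
  norm_extends : ∀ x : ℚ_[p], ‖algebraMap ℚ_[p] C x‖ = ‖x‖
  dense_algebraic : Dense {x : C | IsAlgebraic ℚ_[p] x}

/-- every continuous field automorphism of `ℂ_p` fixing `ℚ_p` restricts to a
`ℚ_p`-automorphism of `ℚ̄_p` (embedded in `ℂ_p` via `ι`), and this gives an isomorphism
between the group of continuous `ℚ_p`-automorphisms of `ℂ_p` and the Galois group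
`G_{ℚ_p} = Gal(ℚ̄_p/ℚ_p)`: there is an injective group homomorphism from `G_{ℚ_p}` to the
automorphisms of `ℂ_p` whose image consists exactly of the continuous ones, compatible
with the embedding `ι`. -/
theorem continuous_autos_of_Cp_eq_galois (p : ℕ) [Fact p.Prime] (C : Type*) [NormedField C]
    [Algebra ℚ_[p] C] [PadicComplexField p C]
    (ι : AlgebraicClosure ℚ_[p] →ₐ[ℚ_[p]] C) :
    ∃ F : (AlgebraicClosure ℚ_[p] ≃ₐ[ℚ_[p]] AlgebraicClosure ℚ_[p]) →* (C ≃ₐ[ℚ_[p]] C),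
      (∀ σ, Continuous (F σ) ∧ ∀ x : AlgebraicClosure ℚ_[p], F σ (ι x) = ι (σ x)) ∧
      Function.Injective F ∧
      ∀ τ : C ≃ₐ[ℚ_[p]] C, Continuous τ → ∃ σ, F σ = τ := by
  obtain ⟨hcomp, _hult, _hclosed, hext, hdense⟩ := ‹PadicComplexField p C›
  letI := hcomp
  have hinj : Function.Injective ι := RingHom.injective ι.toRingHom
  -- the range of ι is exactly the set of algebraic elements of C
  have hrange : Set.range ι = {x : C | IsAlgebraic ℚ_[p] x} := by
    apply Set.Subset.antisymm
    · rintro _ ⟨x, rfl⟩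
      exact (Algebra.IsAlgebraic.isAlgebraic x).algHom ι
    · intro x hx
      have hint : IsIntegral ℚ_[p] x := hx.isIntegral
      set P := minpoly ℚ_[p] x with hP
      have hPm : P.Monic := minpoly.monic hint
      have hd : 0 < P.degree := minpoly.degree_pos hint
      set Q := P.map (algebraMap ℚ_[p] (AlgebraicClosure ℚ_[p])) with hQ
      have hQ0 : Q ≠ 0 := Polynomial.map_ne_zero hPm.ne_zero
      have hsplit : Q.Splits := IsAlgClosed.splits Q
      have hmapmap : Q.map ι.toRingHom = P.map (algebraMap ℚ_[p] C) := by
        rw [hQ, Polynomial.map_map]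
        congr 1
        exact ι.comp_algebraMap
      have hev : (Q.map ι.toRingHom).IsRoot x := by
        show Polynomial.eval x (Q.map ι.toRingHom) = 0
        rw [hmapmap, Polynomial.eval_map, ← Polynomial.aeval_def]
        exact minpoly.aeval ℚ_[p] x
      have hxroot : x ∈ (Q.map ι.toRingHom).roots :=
        Polynomial.mem_roots'.mpr ⟨by rw [hmapmap]; exact Polynomial.map_ne_zero hPm.ne_zero, hev⟩
      rw [hsplit.roots_map_of_injective (i := ι.toRingHom) hinj] at hxroot
      obtain ⟨r, _, hr⟩ := Multiset.mem_map.mp hxroot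
      exact ⟨r, hr⟩
  have hdr : DenseRange ι := by
    rw [DenseRange, hrange]; exact hdense
  -- key isometry property: any two Q_p-algebra embeddings of a finite extension have equal norms
  have key : ∀ (σ : AlgebraicClosure ℚ_[p] →ₐ[ℚ_[p]] AlgebraicClosure ℚ_[p])
      (z : AlgebraicClosure ℚ_[p]), ‖ι (σ z)‖ = ‖ι z‖ := by
    intro σ z
    have hz : IsIntegral ℚ_[p] z := (Algebra.IsAlgebraic.isAlgebraic z).isIntegral
    let K := IntermediateField.adjoin ℚ_[p] ({z} : Set (AlgebraicClosure ℚ_[p]))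
    haveI : FiniteDimensional ℚ_[p] K := IntermediateField.adjoin.finiteDimensional hz
    have hmem : z ∈ K := IntermediateField.subset_adjoin _ _ (Set.mem_singleton z)
    have h := aux_norm_eq p C hext K (ι.comp K.val)
      ((ι.comp σ).comp K.val) ⟨z, hmem⟩
    simpa using h.symm
  -- induced normed field structure on the algebraic closure
  letI : NormedField (AlgebraicClosure ℚ_[p]) :=
    NormedField.induced _ _ ι.toRingHom (RingHom.injective _)
  letI : UniformSpace (AlgebraicClosure ℚ_[p]) := PseudoMetricSpace.toUniformSpace
  have hiso : Isometry (ι : AlgebraicClosure ℚ_[p] → C) := by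
    apply Isometry.of_dist_eq
    intro a b
    show dist a b = dist (ι a) (ι b)
    rw [dist_eq_norm, dist_eq_norm, ← map_sub]
    rfl
  have hui : IsUniformInducing (ι : AlgebraicClosure ℚ_[p] → C) := hiso.isUniformInducing
  have hdi : IsDenseInducing (ι : AlgebraicClosure ℚ_[p] → C) := hui.isDenseInducing hdr
  -- uniform continuity of ι ∘ σ
  have huc : ∀ σ : AlgebraicClosure ℚ_[p] →ₐ[ℚ_[p]] AlgebraicClosure ℚ_[p],
      UniformContinuous (ι.toRingHom.comp σ.toRingHom : AlgebraicClosure ℚ_[p] → C) := by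
    intro σ
    have : Isometry (fun z => ι (σ z) : AlgebraicClosure ℚ_[p] → C) := by
      apply Isometry.of_dist_eq
      intro a b
      rw [dist_eq_norm, dist_eq_norm, ← map_sub, ← map_sub, key]
      rfl
    exact this.uniformContinuous
  -- extension to C
  let e : (AlgebraicClosure ℚ_[p] →ₐ[ℚ_[p]] AlgebraicClosure ℚ_[p]) → (C →+* C) := fun σ =>
    IsDenseInducing.extendRingHom (i := ι.toRingHom) (f := ι.toRingHom.comp σ.toRingHom)
      hui hdr (huc σ)
  have he_comm : ∀ σ x, e σ (ι x) = ι (σ x) := fun σ x =>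
    hdi.extend_eq (huc σ).continuous x
  have he_cont : ∀ σ, Continuous (e σ) := fun σ =>
    (uniformContinuous_uniformly_extend hui hdr (huc σ)).continuous
  -- uniqueness on the dense range
  have ext_unique : ∀ (φ ψ : C → C), Continuous φ → Continuous ψ →
      (∀ x, φ (ι x) = ψ (ι x)) → φ = ψ := by
    intro φ ψ hφ hψ hagree
    apply Continuous.ext_on hdr hφ hψ
    rintro _ ⟨x, rfl⟩
    exact hagree x
  -- e as an algebra hom
  have he_algebraMap : ∀ σ (c : ℚ_[p]), e σ (algebraMap ℚ_[p] C c) = algebraMap ℚ_[p] C c := by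
    intro σ c
    rw [← ι.commutes c, he_comm, σ.commutes]
  let eA : (AlgebraicClosure ℚ_[p] →ₐ[ℚ_[p]] AlgebraicClosure ℚ_[p]) → (C →ₐ[ℚ_[p]] C) :=
    fun σ => { e σ with commutes' := he_algebraMap σ }
  have heA : ∀ σ (x : C), eA σ x = e σ x := fun _ _ => rfl
  have he_comp : ∀ σ τ (x : C), e σ (e τ x) = e (σ.comp τ) x := by
    intro σ τ
    have hagr : ∀ x : AlgebraicClosure ℚ_[p],
        (fun y => e σ (e τ y)) (ι x) = e (σ.comp τ) (ι x) := by
      intro x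
      show e σ (e τ (ι x)) = e (σ.comp τ) (ι x)
      rw [he_comm, he_comm, he_comm]
      rfl
    have := ext_unique _ _ ((he_cont σ).comp (he_cont τ)) (he_cont (σ.comp τ)) hagr
    exact fun x => congrFun this x
  have he_id : ∀ x : C, e (AlgHom.id ℚ_[p] _) x = x := by
    have := ext_unique (e (AlgHom.id ℚ_[p] _)) id (he_cont _) continuous_id
      (fun x => by rw [he_comm]; rfl)
    exact fun x => congrFun this x
  -- build the monoid hom
  have hofAlg : ∀ σ : AlgebraicClosure ℚ_[p] ≃ₐ[ℚ_[p]] AlgebraicClosure ℚ_[p],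
      (eA σ.toAlgHom).comp (eA σ.symm.toAlgHom) = AlgHom.id ℚ_[p] C := by
    intro σ
    ext x
    show e σ.toAlgHom (e σ.symm.toAlgHom x) = x
    rw [he_comp]
    have : σ.toAlgHom.comp σ.symm.toAlgHom = AlgHom.id ℚ_[p] _ := by
      ext y; simp
    rw [this, he_id]
  refine ⟨{ toFun := fun σ => AlgEquiv.ofAlgHom (eA σ.toAlgHom) (eA σ.symm.toAlgHom)
              (hofAlg σ) (by simpa using hofAlg σ.symm),
            map_one' := ?_, map_mul' := ?_ }, ?_, ?_, ?_⟩
  · apply AlgEquiv.ext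
    intro x
    exact he_id x
  · intro σ τ
    apply AlgEquiv.ext
    intro x
    show e (σ * τ).toAlgHom x = e σ.toAlgHom (e τ.toAlgHom x)
    rw [he_comp]
    rfl
  · intro σ
    refine ⟨he_cont σ.toAlgHom, fun x => he_comm σ.toAlgHom x⟩
  · intro σ σ' h
    apply AlgEquiv.ext
    intro x
    have h1 : e σ.toAlgHom (ι x) = e σ'.toAlgHom (ι x) :=
      congrArg (fun g : C ≃ₐ[ℚ_[p]] C => g (ι x)) h
    rw [he_comm, he_comm] at h1
    exact hinj h1
  · intro τ hτ
    -- τ maps the range of ι into itself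
    have hmem : ∀ x : AlgebraicClosure ℚ_[p], τ (ι x) ∈ ι.range := by
      intro x
      have : IsAlgebraic ℚ_[p] (τ (ι x)) :=
        ((Algebra.IsAlgebraic.isAlgebraic x).algHom ι).algHom τ.toAlgHom
      have : τ (ι x) ∈ Set.range ι := by rw [hrange]; exact this
      obtain ⟨y, hy⟩ := this
      exact ⟨y, hy⟩
    let σ₀ : AlgebraicClosure ℚ_[p] →ₐ[ℚ_[p]] AlgebraicClosure ℚ_[p] :=
      (AlgEquiv.ofInjective ι hinj).symm.toAlgHom.comp
        ((τ.toAlgHom.comp ι).codRestrict ι.range hmem)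
    have hσ₀ : ∀ x, ι (σ₀ x) = τ (ι x) := by
      intro x
      have h1 : AlgEquiv.ofInjective ι hinj (σ₀ x)
          = ((τ.toAlgHom.comp ι).codRestrict ι.range hmem) x := by
        show AlgEquiv.ofInjective ι hinj ((AlgEquiv.ofInjective ι hinj).symm _) = _
        rw [AlgEquiv.apply_symm_apply]
        rfl
      have h3 := congrArg Subtype.val h1
      exact h3
    have hbij : Function.Bijective σ₀ := Algebra.IsAlgebraic.algHom_bijective σ₀
    refine ⟨AlgEquiv.ofBijective σ₀ hbij, ?_⟩
    apply AlgEquiv.ext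
    intro x
    have := ext_unique (e (AlgEquiv.ofBijective σ₀ hbij).toAlgHom) τ
      (he_cont _) hτ (fun y => by rw [he_comm]; exact hσ₀ y)
    exact congrFun this x
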